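/- Let M:ℝ→ℝ^{n×n} be a continuously differentiable symmetric-matrix-valued function with a₁I ⪯ M(t) ⪯ a₂I for constants a₂ ≥ a₁ > 0, and let A:ℝ→ℝ^{n×n} be continuous. If Ṁ(t) + A(t)ᵀM(t) + M(t)A(t) + 2λM(t) ⪯ 0 for all t, then every solution of δ̇ = A(t)δ satisfies |δ(t)| ≤ √(a₂/a₁) e^{-λ t} |δ(0)| for all t ≥ 0. -/

import Mathlib

open Matrix
attribute [local instance] Matrix.normedAddCommGroup Matrix.normedSpace

private noncomputable def entryCLM {n : ℕ} (i j : Fin n) : Matrix (Fin n) (Fin n) ℝ →L[ℝ] ℝ :=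
  LinearMap.toContinuousLinearMap
    { toFun := fun X => X i j
      map_add' := fun _ _ => rfl
      map_smul' := fun _ _ => rfl }

private lemma entryCLM_apply {n : ℕ} (i j : Fin n) (X : Matrix (Fin n) (Fin n) ℝ) :
    entryCLM i j X = X i j := rfl

/-- If a C¹ symmetric metric `M(t)` with `a₁ I ⪯ M(t) ⪯ a₂ I`
(`a₂ ≥ a₁ > 0`) satisfies `Ṁ + AᵀM + MA + 2λM ⪯ 0` for all `t`, then every
solution of `δ̇ = A(t)δ` satisfies `|δ(t)| ≤ √(a₂/a₁) e^{-λt} |δ(0)|` for `t ≥ 0`. -/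
theorem contraction_metric_exponential_decay {n : ℕ}
    (a₁ a₂ lam : ℝ) (ha₁ : 0 < a₁) (ha₁₂ : a₁ ≤ a₂) (hlam : 0 < lam)
    (M M' A : ℝ → Matrix (Fin n) (Fin n) ℝ)
    (hMderiv : ∀ t, HasDerivAt M (M' t) t)
    (hM'cont : Continuous M')
    (hMsym : ∀ t, (M t).IsSymm)
    (hMlb : ∀ t, (M t - a₁ • (1 : Matrix (Fin n) (Fin n) ℝ)).PosSemidef)
    (hMub : ∀ t, (a₂ • (1 : Matrix (Fin n) (Fin n) ℝ) - M t).PosSemidef)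
    (hAcont : Continuous A)
    (hLMI : ∀ t, (-(M' t + (A t)ᵀ * M t + M t * A t + (2 * lam) • M t)).PosSemidef)
    (δ : ℝ → EuclideanSpace ℝ (Fin n))
    (hδ : ∀ t, HasDerivAt δ (WithLp.toLp 2 ((A t) *ᵥ (δ t))) t) :
    ∀ t ≥ (0:ℝ), ‖δ t‖ ≤ Real.sqrt (a₂ / a₁) * Real.exp (-lam * t) * ‖δ 0‖ := by
  have hdot : ∀ x : EuclideanSpace ℝ (Fin n), (x : Fin n → ℝ) ⬝ᵥ x = ‖x‖ ^ 2 := by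
    intro x
    rw [EuclideanSpace.norm_eq, Real.sq_sqrt (Finset.sum_nonneg fun i _ => sq_nonneg _)]
    simp [dotProduct, sq]
  set V : ℝ → ℝ := fun s => (δ s : Fin n → ℝ) ⬝ᵥ (M s *ᵥ (δ s : Fin n → ℝ)) with hVdef
  set D : ℝ → ℝ := fun s =>
      (δ s : Fin n → ℝ) ⬝ᵥ ((M' s + (A s)ᵀ * M s + M s * A s) *ᵥ (δ s : Fin n → ℝ)) with hDdef
  have hδc : ∀ (s : ℝ) (i : Fin n), HasDerivAt (fun u => δ u i) ((A s *ᵥ δ s) i) s := by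
    intro s i
    have h := (EuclideanSpace.proj i (𝕜 := ℝ)).hasFDerivAt.comp_hasDerivAt s (hδ s)
    simp at h
    exact h
  have hMc : ∀ (s : ℝ) (i j : Fin n), HasDerivAt (fun u => M u i j) (M' s i j) s := by
    intro s i j
    exact (entryCLM i j).hasFDerivAt.comp_hasDerivAt s (hMderiv s)
  have hVd : ∀ s, HasDerivAt V (D s) s := by
    intro s
    have h1 : HasDerivAt (fun u => ∑ i, ∑ j, δ u i * (M u i j * δ u j))
        (∑ i, ∑ j, ((A s *ᵥ δ s) i * (M s i j * δ s j)
          + δ s i * (M' s i j * δ s j + M s i j * (A s *ᵥ δ s) j))) s := by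
      refine HasDerivAt.fun_sum fun i _ => HasDerivAt.fun_sum fun j _ => ?_
      exact (hδc s i).mul ((hMc s i j).mul (hδc s j))
    have hfun : V = fun u => ∑ i, ∑ j, δ u i * (M u i j * δ u j) := by
      funext u
      simp [hVdef, dotProduct, mulVec, Finset.mul_sum]
    have hval : D s = ∑ i, ∑ j, ((A s *ᵥ δ s) i * (M s i j * δ s j)
        + δ s i * (M' s i j * δ s j + M s i j * (A s *ᵥ δ s) j)) := by
      have e1 : (δ s : Fin n → ℝ) ⬝ᵥ (((A s)ᵀ * M s) *ᵥ (δ s : Fin n → ℝ))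
          = (A s *ᵥ δ s) ⬝ᵥ (M s *ᵥ (δ s : Fin n → ℝ)) := by
        rw [← mulVec_mulVec, dotProduct_mulVec _ ((A s)ᵀ), vecMul_transpose]
      have e2 : (δ s : Fin n → ℝ) ⬝ᵥ ((M s * A s) *ᵥ (δ s : Fin n → ℝ))
          = (δ s : Fin n → ℝ) ⬝ᵥ (M s *ᵥ (A s *ᵥ (δ s : Fin n → ℝ))) := by
        rw [← mulVec_mulVec]
      rw [hDdef]
      simp only [add_mulVec, dotProduct_add, e1, e2]
      simp [dotProduct, mulVec, Finset.mul_sum, Finset.sum_add_distrib, mul_add,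
        mul_assoc]
      ring
    rw [hfun, hval]
    exact h1
  have hstar : ∀ x : Fin n → ℝ, star x = x := fun x => by
    funext i; simp
  have key : ∀ s, D s ≤ -(2 * lam) * V s := by
    intro s
    have h0 := (hLMI s).dotProduct_mulVec_nonneg (δ s : Fin n → ℝ)
    rw [hstar, neg_mulVec, dotProduct_neg] at h0
    have hexp : (δ s : Fin n → ℝ) ⬝ᵥ
        ((M' s + (A s)ᵀ * M s + M s * A s + (2 * lam) • M s) *ᵥ (δ s : Fin n → ℝ))
        = D s + (2 * lam) * V s := by
      simp [hDdef, hVdef, add_mulVec, dotProduct_add, smul_mulVec, dotProduct_smul,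
        smul_eq_mul]
    rw [hexp] at h0
    linarith
  set g : ℝ → ℝ := fun u => Real.exp (2 * lam * u) * V u with hgdef
  have hgd : ∀ s, HasDerivAt g
      (Real.exp (2 * lam * s) * (2 * lam) * V s + Real.exp (2 * lam * s) * D s) s := by
    intro s
    have h := (((hasDerivAt_id s).const_mul (2 * lam)).exp).mul (hVd s)
    exact h.congr_deriv (by simp)
  have hmono : AntitoneOn g (Set.Ici (0:ℝ)) := by
    apply antitoneOn_of_deriv_nonpos (convex_Ici 0)
    · exact (Differentiable.continuous fun s => (hgd s).differentiableAt).continuousOn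
    · exact fun s _ => ((hgd s).differentiableAt).differentiableWithinAt
    · intro s _
      rw [(hgd s).deriv]
      have hD := key s
      have hE := Real.exp_pos (2 * lam * s)
      nlinarith
  intro t ht
  have hg0 : g t ≤ g 0 := hmono (Set.self_mem_Ici) (Set.mem_Ici.mpr ht) ht
  have hVineq : Real.exp (2 * lam * t) * V t ≤ V 0 := by
    simpa [hgdef] using hg0
  have hE : Real.exp (-(2 * lam * t)) * Real.exp (2 * lam * t) = 1 := by
    rw [← Real.exp_add]; simp
  have hEpos : (0:ℝ) < Real.exp (-(2 * lam * t)) := Real.exp_pos _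
  have h3 : V t ≤ Real.exp (-(2 * lam * t)) * V 0 := by
    calc V t = Real.exp (-(2 * lam * t)) * (Real.exp (2 * lam * t) * V t) := by
          rw [← mul_assoc, hE, one_mul]
      _ ≤ Real.exp (-(2 * lam * t)) * V 0 := by
          exact mul_le_mul_of_nonneg_left hVineq hEpos.le
  have hlb : a₁ * ‖δ t‖ ^ 2 ≤ V t := by
    have h0 := (hMlb t).dotProduct_mulVec_nonneg (δ t : Fin n → ℝ)
    rw [hstar] at h0
    have : (δ t : Fin n → ℝ) ⬝ᵥ ((M t - a₁ • (1:Matrix (Fin n) (Fin n) ℝ)) *ᵥ (δ t : Fin n → ℝ))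
        = V t - a₁ * ‖δ t‖ ^ 2 := by
      simp [hVdef, sub_mulVec, dotProduct_sub, smul_mulVec, one_mulVec,
        dotProduct_smul, smul_eq_mul, hdot]
    rw [this] at h0
    linarith
  have hub : V 0 ≤ a₂ * ‖δ 0‖ ^ 2 := by
    have h0 := (hMub 0).dotProduct_mulVec_nonneg (δ 0 : Fin n → ℝ)
    rw [hstar] at h0
    have : (δ 0 : Fin n → ℝ) ⬝ᵥ ((a₂ • (1:Matrix (Fin n) (Fin n) ℝ) - M 0) *ᵥ (δ 0 : Fin n → ℝ))
        = a₂ * ‖δ 0‖ ^ 2 - V 0 := by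
      simp [hVdef, sub_mulVec, dotProduct_sub, smul_mulVec, one_mulVec,
        dotProduct_smul, smul_eq_mul, hdot]
    rw [this] at h0
    linarith
  have hsq : ‖δ t‖ ^ 2 ≤ (a₂ / a₁) * Real.exp (-(2 * lam * t)) * ‖δ 0‖ ^ 2 := by
    have h4 : a₁ * ‖δ t‖ ^ 2 ≤ Real.exp (-(2 * lam * t)) * (a₂ * ‖δ 0‖ ^ 2) := by
      calc a₁ * ‖δ t‖ ^ 2 ≤ V t := hlb
        _ ≤ Real.exp (-(2 * lam * t)) * V 0 := h3
        _ ≤ Real.exp (-(2 * lam * t)) * (a₂ * ‖δ 0‖ ^ 2) :=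
            mul_le_mul_of_nonneg_left hub hEpos.le
    rw [← sub_nonneg]
    have : (a₂ / a₁) * Real.exp (-(2 * lam * t)) * ‖δ 0‖ ^ 2 - ‖δ t‖ ^ 2
        = (Real.exp (-(2 * lam * t)) * (a₂ * ‖δ 0‖ ^ 2) - a₁ * ‖δ t‖ ^ 2) / a₁
          + ‖δ t‖ ^ 2 * (a₁ / a₁ - 1) := by
      field_simp
      ring
    rw [this, div_self ha₁.ne']
    simp only [sub_self, mul_zero, add_zero]
    exact div_nonneg (by linarith) ha₁.le
  have hR : (Real.sqrt (a₂ / a₁) * Real.exp (-lam * t) * ‖δ 0‖) ^ 2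
      = (a₂ / a₁) * Real.exp (-(2 * lam * t)) * ‖δ 0‖ ^ 2 := by
    have h1 : Real.sqrt (a₂ / a₁) ^ 2 = a₂ / a₁ := Real.sq_sqrt (div_nonneg (ha₁.le.trans ha₁₂) ha₁.le)
    have h2 : Real.exp (-lam * t) ^ 2 = Real.exp (-(2 * lam * t)) := by
      rw [sq, ← Real.exp_add]; ring_nf
    calc (Real.sqrt (a₂ / a₁) * Real.exp (-lam * t) * ‖δ 0‖) ^ 2
        = Real.sqrt (a₂ / a₁) ^ 2 * Real.exp (-lam * t) ^ 2 * ‖δ 0‖ ^ 2 := by ring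
      _ = (a₂ / a₁) * Real.exp (-(2 * lam * t)) * ‖δ 0‖ ^ 2 := by rw [h1, h2]
  have hfin := Real.sqrt_le_sqrt (hsq.trans_eq hR.symm)
  rwa [Real.sqrt_sq (norm_nonneg _), Real.sqrt_sq (by positivity)] at hfin
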